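/- Let α, τ, ξ be real numbers with 0 < α < 1, ξ ≥ 1/4 and 1+α ≤ τ < 2. Then |T_s| > |T_B|, where |·| denotes the complex modulus. (In fact |T_s| ≥ tanh(π/4) > 0.655 and |T_B| ≤ 1/2.) -/

import Mathlib

/-- The term `T_s` of the generalised Fredholm symbol on the segment `Γ₁`. -/
noncomputable def Ts (α τ ξ : ℝ) : ℂ :=
  Complex.sin ((Real.pi : ℂ) * (1 - (τ : ℂ) + (α : ℂ) - Complex.I * (ξ : ℂ))) /
    Complex.sin ((Real.pi : ℂ) * (1 - (τ : ℂ) + 2 * (α : ℂ) - Complex.I * (ξ : ℂ)))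

/-- The term `T_B` of the generalised Fredholm symbol on the segment `Γ₁`. -/
noncomputable def TB (α τ ξ : ℝ) : ℂ :=
  Complex.sin ((Real.pi : ℂ) * (α : ℂ)) / (Real.pi : ℂ) *
      Complex.Gamma ((τ : ℂ) - 2 * (α : ℂ) + 1 + Complex.I * (ξ : ℂ)) *
      Complex.Gamma (2 * (α : ℂ)) /
    Complex.Gamma ((τ : ℂ) + 1 + Complex.I * (ξ : ℂ))

open Real in
open Real in
lemma abs_sin_sq (x y : ℝ) :
    ‖Complex.sin ((x : ℂ) + (y : ℂ) * Complex.I)‖ ^ 2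
      = Real.sin x ^ 2 + Real.sinh y ^ 2 := by
  rw [Complex.sin_add_mul_I, ← Complex.ofReal_sin, ← Complex.ofReal_cos,
    ← Complex.ofReal_cosh, ← Complex.ofReal_sinh, ← Complex.ofReal_mul, ← Complex.ofReal_mul,
    Complex.sq_norm, Complex.normSq_add_mul_I]
  nlinarith [Real.sin_sq_add_cos_sq x, Real.cosh_sq y]

open Real in
lemma sinh_quarter_pi_sq : 1/3 < Real.sinh (π/4) ^ 2 := by
  rw [Real.sinh_eq, Real.exp_neg]
  have h1 := Real.add_one_le_exp (π/4)
  have h2 := Real.exp_pos (π/4)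
  have hu : Real.exp (π/4) * (Real.exp (π/4))⁻¹ = 1 := mul_inv_cancel₀ (ne_of_gt h2)
  have hπ := Real.pi_gt_d6
  nlinarith [sq_nonneg (Real.exp (π/4) - 2), inv_pos.mpr h2]

open Real in
lemma Ts_gt_half (α τ ξ : ℝ) (hξ : 1 / 4 ≤ ξ) : 1/2 < ‖Ts α τ ξ‖ := by
  have hA : (Real.pi : ℂ) * (1 - (τ : ℂ) + (α : ℂ) - Complex.I * (ξ : ℂ))
      = ((π * (1 - τ + α) : ℝ) : ℂ) + ((-(π * ξ) : ℝ) : ℂ) * Complex.I := by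
    push_cast; ring
  have hB : (Real.pi : ℂ) * (1 - (τ : ℂ) + 2 * (α : ℂ) - Complex.I * (ξ : ℂ))
      = ((π * (1 - τ + 2 * α) : ℝ) : ℂ) + ((-(π * ξ) : ℝ) : ℂ) * Complex.I := by
    push_cast; ring
  have habsA : ‖Complex.sin ((Real.pi : ℂ) *
      (1 - (τ : ℂ) + (α : ℂ) - Complex.I * (ξ : ℂ)))‖ ^ 2
      = Real.sin (π * (1 - τ + α)) ^ 2 + Real.sinh (π * ξ) ^ 2 := by
    rw [hA, abs_sin_sq, Real.sinh_neg]; ring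
  have habsB : ‖Complex.sin ((Real.pi : ℂ) *
      (1 - (τ : ℂ) + 2 * (α : ℂ) - Complex.I * (ξ : ℂ)))‖ ^ 2
      = Real.sin (π * (1 - τ + 2 * α)) ^ 2 + Real.sinh (π * ξ) ^ 2 := by
    rw [hB, abs_sin_sq, Real.sinh_neg]; ring
  have hmono : Real.sinh (π/4) ≤ Real.sinh (π * ξ) := by
    apply Real.sinh_le_sinh.mpr
    nlinarith [Real.pi_pos]
  have hq := sinh_quarter_pi_sq
  have hS : 1/3 < Real.sinh (π * ξ) ^ 2 := by
    nlinarith [Real.sinh_pos_iff.mpr (by positivity : (0:ℝ) < π/4)]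
  have hsin2 : Real.sin (π * (1 - τ + 2 * α)) ^ 2 ≤ 1 := Real.sin_sq_le_one _
  have hsin1 : 0 ≤ Real.sin (π * (1 - τ + α)) ^ 2 := sq_nonneg _
  rw [Ts, norm_div]
  set a := ‖Complex.sin ((Real.pi : ℂ) * (1 - (τ : ℂ) + (α : ℂ) - Complex.I * (ξ : ℂ)))‖
  set b := ‖Complex.sin ((Real.pi : ℂ) * (1 - (τ : ℂ) + 2 * (α : ℂ) - Complex.I * (ξ : ℂ)))‖
  have ha0 : 0 ≤ a := norm_nonneg _
  have hb0 : 0 < b := by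
    have := norm_nonneg (Complex.sin ((Real.pi : ℂ) * (1 - (τ : ℂ) + 2 * (α : ℂ) - Complex.I * (ξ : ℂ))))
    nlinarith [sq_nonneg (Real.sin (π * (1 - τ + 2 * α)))]
  rw [lt_div_iff₀ hb0]
  nlinarith

open Real in
lemma TB_le_half (α τ ξ : ℝ) (hα : 0 < α) (hα' : α < 1)
    (hτ : 1 + α ≤ τ) (hτ' : τ < 2) :
    ‖TB α τ ξ‖ ≤ 1/2 := by
  set s : ℂ := (τ : ℂ) - 2 * (α : ℂ) + 1 + Complex.I * (ξ : ℂ) with hs_def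
  set t : ℂ := 2 * (α : ℂ) with ht_def
  have hs : 0 < s.re := by simp [hs_def, ht_def]; nlinarith
  have ht : 0 < t.re := by simp [ht_def]; positivity
  have hst : s + t = (τ : ℂ) + 1 + Complex.I * (ξ : ℂ) := by rw [hs_def, ht_def]; ring
  have hne : Complex.Gamma ((τ : ℂ) + 1 + Complex.I * (ξ : ℂ)) ≠ 0 := by
    apply Complex.Gamma_ne_zero_of_re_pos
    simp; nlinarith
  have key := Complex.Gamma_mul_Gamma_eq_betaIntegral hs ht
  have h1 : Complex.sin ((Real.pi : ℂ) * (α : ℂ)) = ((Real.sin (π * α) : ℝ) : ℂ) := by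
    rw [← Complex.ofReal_mul, Complex.ofReal_sin]
  have hTB : TB α τ ξ = ((Real.sin (π * α) / π : ℝ) : ℂ) * Complex.betaIntegral s t := by
    rw [TB, mul_assoc, key, hst, h1,
      mul_comm (Complex.Gamma ((τ : ℂ) + 1 + Complex.I * (ξ : ℂ))), ← mul_assoc,
      mul_div_assoc, div_self hne, mul_one]
    push_cast
    ring
  -- bound the beta integral
  have hr : (-1 : ℝ) < 2 * α - 1 := by linarith
  have hint : IntervalIntegrable (fun x : ℝ => (1 - x) ^ (2 * α - 1)) MeasureTheory.volume 0 1 := by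
    have := (intervalIntegral.intervalIntegrable_rpow' hr (a := 0) (b := 1)).comp_sub_left 1
    simpa using this.symm
  have hval : (∫ x in (0:ℝ)..1, (1 - x) ^ (2 * α - 1)) = 1 / (2 * α) := by
    rw [intervalIntegral.integral_comp_sub_left (fun u : ℝ => u ^ (2 * α - 1)) 1]
    norm_num
    rw [integral_rpow (Or.inl hr)]
    rw [Real.one_rpow, Real.zero_rpow (ne_of_gt (by linarith : (0:ℝ) < 2 * α - 1 + 1))]
    ring_nf
  have hbeta : ‖Complex.betaIntegral s t‖ ≤ 1 / (2 * α) := by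
    rw [Complex.betaIntegral]
    calc ‖∫ x in (0:ℝ)..1, (x : ℂ) ^ (s - 1) * ((1 : ℂ) - x) ^ (t - 1)‖
        ≤ |∫ x in (0:ℝ)..1, (1 - x) ^ (2 * α - 1)| := by
          apply intervalIntegral.norm_integral_le_abs_of_norm_le _ hint
          filter_upwards [MeasureTheory.ae_restrict_mem measurableSet_uIoc] with x hx
          rw [Set.uIoc_of_le (by norm_num : (0:ℝ) ≤ 1)] at hx
          obtain ⟨hx0, hx1⟩ := hx
          rw [norm_mul]
          rcases lt_or_eq_of_le hx1 with hx1' | hx1'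
          · have hpos : (0:ℝ) < 1 - x := by linarith
            have e1 : ‖(x : ℂ) ^ (s - 1)‖ = x ^ (s - 1).re := by
              rw [Complex.norm_cpow_eq_rpow_re_of_pos hx0]
            have e2 : ‖((1 : ℂ) - x) ^ (t - 1)‖ = (1 - x) ^ (2 * α - 1) := by
              rw [show ((1 : ℂ) - x) = ((1 - x : ℝ) : ℂ) by push_cast; ring,
                Complex.norm_cpow_eq_rpow_re_of_pos hpos]
              congr 1
              simp [ht_def]
            rw [e1, e2]
            have hxle : x ^ (s - 1).re ≤ 1 := by
              apply Real.rpow_le_one hx0.le hx1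
              simp [hs_def, ht_def]; nlinarith
            nlinarith [Real.rpow_nonneg hpos.le (2 * α - 1), Real.rpow_nonneg hx0.le (s-1).re]
          · subst hx1'
            rw [show ((1 : ℂ) - (1:ℝ)) = 0 by norm_num, show ((1:ℝ):ℂ) = 1 by norm_num,
              Complex.one_cpow, norm_one, one_mul, sub_self]
            by_cases h2a : (2 * α - 1 : ℝ) = 0
            · rw [show t - 1 = ((2 * α - 1 : ℝ) : ℂ) by rw [ht_def]; push_cast; ring, h2a]
              norm_num
            · rw [Complex.zero_cpow (by rw [show t - 1 = ((2 * α - 1 : ℝ) : ℂ) by rw [ht_def]; push_cast; ring]; exact_mod_cast h2a), Real.zero_rpow h2a]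
              norm_num
      _ = 1 / (2 * α) := by rw [hval]; rw [abs_of_pos (by positivity)]
  rw [hTB, norm_mul, Complex.norm_real, Real.norm_eq_abs]
  have hsin_nonneg : 0 ≤ Real.sin (π * α) := by
    apply Real.sin_nonneg_of_nonneg_of_le_pi (by positivity)
    nlinarith [Real.pi_pos]
  have hsin_le : Real.sin (π * α) ≤ π * α := Real.sin_le (by positivity)
  have habs : |Real.sin (π * α) / π| = Real.sin (π * α) / π := by
    rw [abs_of_nonneg]; positivity
  rw [habs]
  have hb0 : 0 ≤ ‖Complex.betaIntegral s t‖ := norm_nonneg _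
  calc Real.sin (π * α) / π * ‖Complex.betaIntegral s t‖
      ≤ Real.sin (π * α) / π * (1 / (2 * α)) := by
        apply mul_le_mul_of_nonneg_left hbeta (by positivity)
    _ ≤ π * α / π * (1 / (2 * α)) := by
        apply mul_le_mul_of_nonneg_right _ (by positivity)
        gcongr
    _ = 1/2 := by field_simp

/-- For `0 < α < 1`, `ξ ≥ 1/4` and `1+α ≤ τ < 2`, one has `|T_s| > |T_B|`. -/
theorem abs_Ts_gt_abs_TB_high_regularity
    (α τ ξ : ℝ) (hα : 0 < α) (hα' : α < 1) (hξ : 1 / 4 ≤ ξ)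
    (hτ : 1 + α ≤ τ) (hτ' : τ < 2) :
    ‖TB α τ ξ‖ < ‖Ts α τ ξ‖ := by
  exact lt_of_le_of_lt (TB_le_half α τ ξ hα hα' hτ hτ') (Ts_gt_half α τ ξ hξ)
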